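/- arXiv:1412.2217 — 2 statements merged into one kernel-verified Lean document; each statement's English description precedes it below -/
import Mathlib

section
/- Let T be the integral transform (Tu)(x) = ∫_Y K(x,y) u(y) dμ_x(y) with ∫_Y K(x,y) dμ_x(y) = I for all x. If there exists a bounded nonnegative function g : X × Y × N_𝔖 → ℝ such that ᵗK(x,y) ν = g(x,y;ν) ν for all x ∈ X, all unit outward normals ν of the convex body 𝔖, and μ_x-almost all y ∈ Y, then 𝔖 is invariant for T: whenever a bounded Borel function u takes values in 𝔖, so does Tu. -/
open Matrix MeasureTheory

/-- A unit outward normal ν to a set S at a boundary point a. -/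
def IsOutwardNormal {m : ℕ} (S : Set (Fin m → ℝ)) (a ν : Fin m → ℝ) : Prop :=
  a ∈ frontier S ∧ (∑ i, ν i ^ 2 = 1) ∧ ∀ u ∈ S, (u - a) ⬝ᵥ ν ≤ 0

lemma integrable_of_bounded' {Y : Type*} [MeasurableSpace Y] {μ : Measure Y}
    [IsFiniteMeasure μ] {f : Y → ℝ} (hf : Measurable f) {C : ℝ}
    (h : ∀ y, |f y| ≤ C) : Integrable f μ :=
  ⟨hf.aestronglyMeasurable, HasFiniteIntegral.of_bounded (C := C)
    (Filter.Eventually.of_forall fun y => by simpa using h y)⟩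

lemma mem_closure_interior_of_convex {m : ℕ} {S : Set (Fin m → ℝ)}
    (hconv : Convex ℝ S) {c u : Fin m → ℝ} (hc : c ∈ interior S) (hu : u ∈ S) :
    u ∈ closure (interior S) := by
  have htend : Filter.Tendsto (fun t : ℝ => t • c + (1 - t) • u)
      (nhdsWithin 0 (Set.Ioi 0)) (nhds u) := by
    have hcont : Continuous (fun t : ℝ => t • c + (1 - t) • u) := by
      continuity
    have := hcont.tendsto 0
    simp only [zero_smul, sub_zero, one_smul, zero_add] at this
    exact this.mono_left nhdsWithin_le_nhds
  refine mem_closure_of_tendsto htend ?_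
  have h1 : ∀ᶠ t : ℝ in nhdsWithin 0 (Set.Ioi 0), t < 1 :=
    (eventually_lt_nhds (by norm_num : (0:ℝ) < 1)).filter_mono nhdsWithin_le_nhds
  filter_upwards [self_mem_nhdsWithin, h1] with t ht ht1
  exact hconv.combo_interior_closure_mem_interior hc (subset_closure hu)
    ht (by linarith) (by ring)

lemma exists_outward_normal {m : ℕ} {S : Set (Fin m → ℝ)}
    (hconv : Convex ℝ S) (hcl : IsClosed S) (hint : (interior S).Nonempty)
    {b : Fin m → ℝ} (hb : b ∉ S) :
    ∃ a ν, IsOutwardNormal S a ν ∧ 0 < (b - a) ⬝ᵥ ν := by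
  obtain ⟨c, hc⟩ := hint
  have hcS : c ∈ S := interior_subset hc
  set φ : ℝ → (Fin m → ℝ) := fun t => c + t • (b - c) with hφ
  have hφcont : Continuous φ := by continuity
  set A : Set ℝ := φ ⁻¹' S ∩ Set.Icc 0 1 with hA
  have hA0 : (0:ℝ) ∈ A := by
    constructor
    · simp [φ, hcS]
    · exact ⟨le_refl _, zero_le_one⟩
  have hAbdd : BddAbove A := ⟨1, fun t ht => ht.2.2⟩
  have hAcl : IsClosed A := (hcl.preimage hφcont).inter isClosed_Icc
  set t₀ := sSup A with ht₀
  have ht₀A : t₀ ∈ A := hAcl.csSup_mem ⟨0, hA0⟩ hAbdd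
  set a := φ t₀ with ha
  have haS : a ∈ S := ht₀A.1
  have ht₀0 : 0 ≤ t₀ := ht₀A.2.1
  have ht₀1 : t₀ < 1 := by
    rcases lt_or_eq_of_le ht₀A.2.2 with h | h
    · exact h
    · exfalso; apply hb
      have hab : a = b := by rw [ha, h]; simp [φ]
      rwa [hab] at haS
  have hani : a ∉ interior S := by
    intro hai
    have hopen : IsOpen (φ ⁻¹' interior S) := isOpen_interior.preimage hφcont
    obtain ⟨ε, hε, hball⟩ := Metric.isOpen_iff.1 hopen t₀ hai
    set t := min (t₀ + ε / 2) ((t₀ + 1) / 2) with htdef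
    have htgt : t₀ < t := lt_min (by linarith) (by linarith)
    have htle : t ≤ 1 := le_trans (min_le_right _ _) (by linarith)
    have htball : t ∈ Metric.ball t₀ ε := by
      rw [Metric.mem_ball, Real.dist_eq, abs_of_pos (by linarith)]
      calc t - t₀ ≤ (t₀ + ε/2) - t₀ := by
            have := min_le_left (t₀ + ε / 2) ((t₀ + 1) / 2); linarith
        _ < ε := by linarith
    have htA : t ∈ A :=
      ⟨Set.mem_preimage.2 (interior_subset (hball htball)), le_trans ht₀0 htgt.le, htle⟩
    exact absurd (le_csSup hAbdd htA) (not_le.2 htgt)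
  have hafr : a ∈ frontier S := by
    rw [frontier, hcl.closure_eq]; exact ⟨haS, hani⟩
  -- separation
  obtain ⟨f, hf⟩ := geometric_hahn_banach_open_point hconv.interior isOpen_interior hani
  have hfS : ∀ u ∈ S, f u ≤ f a := by
    intro u hu
    have : u ∈ closure (interior S) := mem_closure_interior_of_convex hconv hc hu
    have hsub : closure (interior S) ⊆ f ⁻¹' Set.Iic (f a) :=
      closure_minimal (fun z hz => (hf z hz).le) (IsClosed.preimage f.continuous isClosed_Iic)
    exact hsub this
  have hfc : f c < f a := hf c hc
  have hfa : f a = f c + t₀ * (f b - f c) := by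
    rw [ha]
    simp only [φ, map_add, _root_.map_smul, smul_eq_mul, map_sub]
    try ring
  have hfb : f a < f b := by
    have h1 : 0 < t₀ * (f b - f c) := by rw [hfa] at hfc; linarith
    have h2 : 0 < f b - f c := by
      rcases lt_trichotomy (f b - f c) 0 with h | h | h
      · exfalso; nlinarith
      · exfalso; rw [h] at h1; simp at h1
      · exact h
    rw [hfa]; nlinarith
  -- build ν
  classical
  set ν₀ : Fin m → ℝ := fun i => f (Pi.single i 1) with hν₀
  have hfd : ∀ v : Fin m → ℝ, f v = v ⬝ᵥ ν₀ := by
    intro v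
    have hv : v = ∑ i, v i • (Pi.single i 1 : Fin m → ℝ) := by
      funext j
      simp [Finset.sum_apply, Pi.single_apply]
    conv_lhs => rw [hv]
    rw [map_sum]
    simp only [_root_.map_smul, smul_eq_mul]
    simp [dotProduct, hν₀, mul_comm]
  have hν₀ne : ν₀ ≠ 0 := by
    intro h
    have : f c = f a := by rw [hfd c, hfd a, h]; simp
    exact absurd this hfc.ne
  have hsumpos : 0 < ∑ i, ν₀ i ^ 2 := by
    rcases Function.ne_iff.1 hν₀ne with ⟨i, hi⟩
    refine Finset.sum_pos' (fun j _ => sq_nonneg _) ⟨i, Finset.mem_univ i, ?_⟩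
    exact lt_of_le_of_ne (sq_nonneg _) (Ne.symm (pow_ne_zero 2 hi))
  set n : ℝ := Real.sqrt (∑ i, ν₀ i ^ 2) with hn
  have hnpos : 0 < n := Real.sqrt_pos.2 hsumpos
  refine ⟨a, n⁻¹ • ν₀, ⟨hafr, ?_, ?_⟩, ?_⟩
  · have : ∑ i, (n⁻¹ • ν₀) i ^ 2 = n⁻¹ ^ 2 * ∑ i, ν₀ i ^ 2 := by
      rw [Finset.mul_sum]
      refine Finset.sum_congr rfl fun i _ => by simp [mul_pow]
    rw [this]
    have hnsq : n ^ 2 = ∑ i, ν₀ i ^ 2 := Real.sq_sqrt hsumpos.le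
    field_simp
    linarith [hnsq]
  · intro u hu
    have key : (u - a) ⬝ᵥ (n⁻¹ • ν₀) = n⁻¹ * ((u ⬝ᵥ ν₀) - (a ⬝ᵥ ν₀)) := by
      rw [sub_dotProduct, dotProduct_smul, dotProduct_smul, smul_eq_mul, smul_eq_mul]
      ring
    rw [key, ← hfd u, ← hfd a]
    have := hfS u hu
    have hninv : 0 ≤ n⁻¹ := by positivity
    nlinarith
  · have key : (b - a) ⬝ᵥ (n⁻¹ • ν₀) = n⁻¹ * ((b ⬝ᵥ ν₀) - (a ⬝ᵥ ν₀)) := by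
      rw [sub_dotProduct, dotProduct_smul, dotProduct_smul, smul_eq_mul, smul_eq_mul]
      ring
    rw [key, ← hfd b, ← hfd a]
    have hninv : 0 < n⁻¹ := by positivity
    nlinarith

/-- sufficiency in Proposition 1: if the normalized matrix-valued
kernel K satisfies ᵗK(x,y)ν = g(x,y;ν)ν with g bounded and nonnegative, for every
unit outward normal ν of the convex body 𝔖 and μ_x-a.e. y, then 𝔖 is invariant for
the transform (Tu)(x) = ∫_Y K(x,y)u(y) dμ_x(y). -/
theorem stmt_13 {X : Type*} {Y : Type*} [TopologicalSpace Y]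
    [LocallyCompactSpace Y] [T2Space Y] [MeasurableSpace Y] [BorelSpace Y]
    (m : ℕ)
    (μ : X → Measure Y) (hfin : ∀ x, IsFiniteMeasure (μ x))
    (hreg : ∀ x, (μ x).Regular)
    (K : X → Y → Matrix (Fin m) (Fin m) ℝ)
    (hKmeas : ∀ x i j, Measurable fun y => K x y i j)
    (hKbdd : ∀ x, ∃ C : ℝ, ∀ y i j, |K x y i j| ≤ C)
    (hnorm : ∀ x i j, ∫ y, K x y i j ∂(μ x) = (1 : Matrix (Fin m) (Fin m) ℝ) i j)
    (S : Set (Fin m → ℝ)) (hSconv : Convex ℝ S) (hScl : IsClosed S)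
    (hSint : (interior S).Nonempty) (hSne : S ≠ Set.univ)
    (g : X → Y → (Fin m → ℝ) → ℝ)
    (hgbdd : ∃ C : ℝ, ∀ x y ν, |g x y ν| ≤ C)
    (hgpos : ∀ x y ν, 0 ≤ g x y ν)
    (heig : ∀ x a ν, IsOutwardNormal S a ν →
      ∀ᵐ y ∂(μ x), (K x y)ᵀ.mulVec ν = g x y ν • ν) :
    ∀ u : Y → (Fin m → ℝ), Measurable u → (∃ C : ℝ, ∀ y, ‖u y‖ ≤ C) →
      (∀ y, u y ∈ S) →
      ∀ x, (fun i => ∫ y, ((K x y).mulVec (u y)) i ∂(μ x)) ∈ S := by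
  intro u hu hubdd huS x
  haveI := hfin x
  by_contra hw
  obtain ⟨a, ν, hnrm, hbn⟩ := exists_outward_normal hSconv hScl hSint hw
  obtain ⟨hafr, hν1, hνS⟩ := hnrm
  set w : Fin m → ℝ := fun i => ∫ y, ((K x y).mulVec (u y)) i ∂(μ x) with hwdef
  obtain ⟨CK, hCK⟩ := hKbdd x
  obtain ⟨Cu, hCu⟩ := hubdd
  -- find i₀ with ν i₀ ≠ 0
  have hνex : ∃ i, ν i ≠ 0 := by
    by_contra hcon
    push_neg at hcon
    simp [hcon] at hν1
  obtain ⟨i₀, hi₀⟩ := hνex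
  -- p y = ((K x y)ᵀ *ᵥ ν) i₀, written as sum
  set p : Y → ℝ := fun y => ∑ j, K x y j i₀ * ν j with hpdef
  have hp : ∀ y, ((K x y)ᵀ.mulVec ν) i₀ = p y := fun y => by
    simp [Matrix.mulVec, dotProduct, Matrix.transpose_apply, hpdef]
  have hpmeas : Measurable p :=
    Finset.measurable_sum _ fun j _ => (hKmeas x j i₀).mul_const _
  have hpbdd : ∀ y, |p y| ≤ ∑ j : Fin m, CK * |ν j| := by
    intro y
    calc |p y| ≤ ∑ j, |K x y j i₀ * ν j| := Finset.abs_sum_le_sum_abs _ _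
      _ ≤ ∑ j : Fin m, CK * |ν j| := by
          refine Finset.sum_le_sum fun j _ => ?_
          rw [abs_mul]
          exact mul_le_mul_of_nonneg_right (hCK y j i₀) (abs_nonneg _)
  set h : Y → ℝ := fun y => p y / ν i₀ with hhdef
  have hhmeas : Measurable h := hpmeas.div_const _
  have hhbdd : ∀ y, |h y| ≤ (∑ j : Fin m, CK * |ν j|) / |ν i₀| := by
    intro y
    rw [hhdef, abs_div]
    exact div_le_div_of_nonneg_right (hpbdd y) (abs_pos.2 hi₀).le |>.trans_eq rfl
  have hhint : Integrable h (μ x) := integrable_of_bounded' hhmeas hhbdd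
  -- a.e. facts
  have hae := heig x a ν ⟨hafr, hν1, hνS⟩
  have haeh : ∀ᵐ y ∂(μ x), h y = g x y ν ∧ (K x y)ᵀ.mulVec ν = h y • ν := by
    filter_upwards [hae] with y hy
    have hcomp : p y = g x y ν * ν i₀ := by
      rw [← hp y, hy]; simp
    have hh : h y = g x y ν := by
      rw [hhdef]; field_simp [hcomp]; rw [hcomp]; ring
    exact ⟨hh, by rw [hh]; exact hy⟩
  -- integral of h is 1
  have hKint : ∀ i j, Integrable (fun y => K x y i j) (μ x) :=
    fun i j => integrable_of_bounded' (hKmeas x i j) (fun y => hCK y i j)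
  have hpint : Integrable p (μ x) := integrable_of_bounded' hpmeas hpbdd
  have hinth : ∫ y, h y ∂(μ x) = 1 := by
    have h1 : ∫ y, p y ∂(μ x) = ν i₀ := by
      rw [hpdef]
      rw [integral_finset_sum _ (fun j _ => (hKint j i₀).mul_const _)]
      have : ∀ j ∈ Finset.univ, ∫ y, K x y j i₀ * ν j ∂(μ x)
          = (1 : Matrix (Fin m) (Fin m) ℝ) j i₀ * ν j := by
        intro j _
        rw [integral_mul_const, hnorm x j i₀]
      rw [Finset.sum_congr rfl this]
      simp [Matrix.one_apply]
    rw [hhdef]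
    simp only []
    rw [integral_div, h1, div_self hi₀]
  -- the function q
  set q : Y → ℝ := fun y => ((K x y).mulVec (u y)) ⬝ᵥ ν with hqdef
  have humeas : ∀ j, Measurable fun y => u y j := fun j => (measurable_pi_apply j).comp hu
  have hKumeas : ∀ i, Measurable fun y => ((K x y).mulVec (u y)) i := by
    intro i
    have : (fun y => ((K x y).mulVec (u y)) i) = fun y => ∑ j, K x y i j * u y j := by
      funext y; simp [Matrix.mulVec, dotProduct]
    rw [this]
    exact Finset.measurable_sum _ fun j _ => (hKmeas x i j).mul (humeas j)
  have hKubdd : ∀ y i, |((K x y).mulVec (u y)) i| ≤ ∑ j : Fin m, CK * Cu := by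
    intro y i
    have : ((K x y).mulVec (u y)) i = ∑ j, K x y i j * u y j := by
      simp [Matrix.mulVec, dotProduct]
    rw [this]
    calc |∑ j, K x y i j * u y j| ≤ ∑ j, |K x y i j * u y j| :=
          Finset.abs_sum_le_sum_abs _ _
      _ ≤ ∑ j : Fin m, CK * Cu := by
          refine Finset.sum_le_sum fun j _ => ?_
          rw [abs_mul]
          have h1 : |u y j| ≤ Cu := (norm_le_pi_norm (u y) j).trans (hCu y)
          have hCK0 : 0 ≤ CK := (abs_nonneg _).trans (hCK y i j)
          exact mul_le_mul (hCK y i j) h1 (abs_nonneg _) hCK0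
  have hKuint : ∀ i, Integrable (fun y => ((K x y).mulVec (u y)) i) (μ x) :=
    fun i => integrable_of_bounded' (hKumeas i) (fun y => hKubdd y i)
  have hqint : Integrable q (μ x) := by
    have : q = fun y => ∑ i, ((K x y).mulVec (u y)) i * ν i := by
      funext y; simp [hqdef, dotProduct]
    rw [this]
    exact integrable_finset_sum _ fun i _ => (hKuint i).mul_const _
  have hintq : ∫ y, q y ∂(μ x) = w ⬝ᵥ ν := by
    have h1 : q = fun y => ∑ i, ((K x y).mulVec (u y)) i * ν i := by
      funext y; simp [hqdef, dotProduct]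
    rw [h1, integral_finset_sum _ (fun i _ => (hKuint i).mul_const _)]
    simp only [integral_mul_const]
    rfl
  -- F
  set F : Y → ℝ := fun y => q y - h y * (a ⬝ᵥ ν) with hFdef
  have hFint : Integrable F (μ x) := hqint.sub (hhint.mul_const _)
  have hintF : ∫ y, F y ∂(μ x) = (w - a) ⬝ᵥ ν := by
    rw [hFdef]
    rw [integral_sub hqint (hhint.mul_const _), integral_mul_const, hinth, hintq,
      sub_dotProduct]
    ring
  have hFae : ∀ᵐ y ∂(μ x), F y ≤ 0 := by
    filter_upwards [haeh] with y ⟨hy1, hy2⟩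
    have hq : q y = h y * (u y ⬝ᵥ ν) := by
      rw [hqdef]
      simp only []
      rw [dotProduct_comm, Matrix.dotProduct_mulVec, ← Matrix.mulVec_transpose, hy2]
      rw [smul_dotProduct, smul_eq_mul, dotProduct_comm]
    have hF : F y = h y * ((u y - a) ⬝ᵥ ν) := by
      rw [hFdef]; simp only []
      rw [hq, sub_dotProduct]; ring
    rw [hF]
    have hh0 : 0 ≤ h y := hy1 ▸ hgpos x y ν
    exact mul_nonpos_of_nonneg_of_nonpos hh0 (hνS (u y) (huS y))
  have hle : ∫ y, F y ∂(μ x) ≤ 0 := integral_nonpos_of_ae hFae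
  rw [hintF] at hle
  exact absurd hbn (not_lt.2 hle)
end

section
/- Let A be an invertible m×m real matrix and let L_1,...,L_m be scalar second-order elliptic operators with constant coefficients. If the operator 𝔄_0(D) = A·diag(L_1,...,L_m) is strongly elliptic, then the orthant {u ∈ ℝ^m : u_i ≥ α_i for all i} is invariant for the system 𝔄_0(D)u = 0 in the half-space ℝⁿ_+: every solution u ∈ C_b(cl ℝⁿ_+)^m ∩ C²(ℝⁿ_+)^m with boundary values in the orthant takes all its values in the orthant. -/
open Matrix

/-- First-order partial derivative ∂f/∂x_j of a scalar function on ℝⁿ. -/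
noncomputable def pd1 (n : ℕ) (f : (Fin n → ℝ) → ℝ) (j : Fin n)
    (x : Fin n → ℝ) : ℝ :=
  fderiv ℝ f x (Pi.single j 1)

/-- Second-order partial derivative ∂²f/∂x_j∂x_k of a scalar function on ℝⁿ. -/
noncomputable def pd2 (n : ℕ) (f : (Fin n → ℝ) → ℝ) (j k : Fin n)
    (x : Fin n → ℝ) : ℝ :=
  pd1 n (fun z => pd1 n f k z) j x

open Filter Topology Set Matrix

lemma aux_lim {c B : ℝ} (h : ∀ η : ℝ, 0 < η → c ≤ η * B) : c ≤ 0 := by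
  by_contra hc
  push_neg at hc
  have hB : 0 < B := by
    by_contra hB
    push_neg at hB
    have := h 1 one_pos
    nlinarith
  have h2 := h (c / (2 * B)) (by positivity)
  have : c / (2 * B) * B = c / 2 := by field_simp
  rw [this] at h2
  linarith

lemma secondDerivTest {g g' : ℝ → ℝ} {c : ℝ}
    (hd : ∀ᶠ t in 𝓝 (0:ℝ), HasDerivAt g (g' t) t)
    (hd2 : HasDerivAt g' c 0)
    (hmin : IsLocalMin g 0) : 0 ≤ c := by
  by_contra hc
  push_neg at hc
  have h0 : g' 0 = 0 := hmin.hasDerivAt_eq_zero hd.self_of_nhds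
  have hs : Tendsto (fun t => g' t / t) (𝓝[≠] (0:ℝ)) (𝓝 c) := by
    have := hasDerivAt_iff_tendsto_slope.mp hd2
    have he : slope g' 0 = fun t => g' t / t := by
      funext t; simp [slope_def_field, h0]
    rwa [he] at this
  have hneg : ∀ᶠ t in 𝓝[≠] (0:ℝ), g' t / t < 0 := hs.eventually_lt_const hc
  have hdm : ∀ᶠ t in 𝓝 (0:ℝ), HasDerivAt g (g' t) t ∧ g 0 ≤ g t := hd.and hmin
  obtain ⟨r, hr, hball⟩ := Metric.eventually_nhds_iff.mp hdm
  obtain ⟨r', hr', hball'⟩ := Metric.eventually_nhds_iff.mp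
    (eventually_nhdsWithin_iff.mp hneg)
  set T := min r r' / 2 with hT
  have hT0 : 0 < T := by positivity
  have hTr : T < r := by
    have : T ≤ r / 2 := by
      rw [hT]; gcongr; exact min_le_left _ _
    linarith
  have hTr' : T < r' := by
    have : T ≤ r' / 2 := by
      rw [hT]; gcongr; exact min_le_right _ _
    linarith
  have hmem : ∀ t ∈ Set.Icc (0:ℝ) T, HasDerivAt g (g' t) t ∧ g 0 ≤ g t := by
    intro t ht
    apply hball
    rw [Real.dist_eq]
    rw [abs_of_nonneg (by linarith [ht.1])]
    · linarith [ht.2]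
  obtain ⟨ξ, hξ, hslope⟩ := exists_hasDerivAt_eq_slope g g' hT0
    (fun t ht => ((hmem t ht).1).continuousAt.continuousWithinAt)
    (fun t ht => (hmem t (Ioo_subset_Icc_self ht)).1)
  have h1 : 0 ≤ g' ξ := by
    rw [hslope]
    apply div_nonneg _ (by linarith [hT0])
    have := (hmem T ⟨le_of_lt hT0, le_refl T⟩).2
    linarith
  have h2 : g' ξ / ξ < 0 := by
    apply hball'
    · rw [Real.dist_eq, sub_zero, abs_of_nonneg (le_of_lt hξ.1)]; linarith [hξ.2]
    · exact ne_of_gt hξ.1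
  have hξ0 : 0 < ξ := hξ.1
  have h3 : g' ξ < 0 := by
    rcases div_neg_iff.mp h2 with ⟨ha, hb⟩ | ⟨ha, hb⟩
    · linarith
    · exact ha
  linarith



lemma clm_apply_eq_sum {N : ℕ} (L : (Fin N → ℝ) →L[ℝ] ℝ) (e : Fin N → ℝ) :
    L e = ∑ k, e k * L (Pi.single k 1) := by
  have he : e = ∑ k, e k • (Pi.single k 1 : Fin N → ℝ) := by
    funext j
    simp [Finset.sum_apply, Pi.single_apply]
  conv_lhs => rw [he]
  rw [map_sum]
  simp [smul_eq_mul]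

lemma diff_pd1 {N : ℕ} {f : (Fin N → ℝ) → ℝ} {x : Fin N → ℝ}
    (hf : ContDiffAt ℝ 2 f x) (k : Fin N) :
    DifferentiableAt ℝ (fun z => pd1 N f k z) x := by
  have h1 : ContDiffAt ℝ 1 (fderiv ℝ f) x := hf.fderiv_right (by norm_num)
  have hd : DifferentiableAt ℝ (fderiv ℝ f) x := h1.differentiableAt (by norm_num)
  have h2 := ((ContinuousLinearMap.apply ℝ ℝ
    (Pi.single k 1 : Fin N → ℝ)).differentiableAt).comp x hd
  simpa [Function.comp_def, pd1] using h2

lemma diff_fderiv_apply {N : ℕ} {f : (Fin N → ℝ) → ℝ} {x : Fin N → ℝ}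
    (hf : ContDiffAt ℝ 2 f x) (e : Fin N → ℝ) :
    DifferentiableAt ℝ (fun z => fderiv ℝ f z e) x := by
  have h1 : ContDiffAt ℝ 1 (fderiv ℝ f) x := hf.fderiv_right (by norm_num)
  have hd : DifferentiableAt ℝ (fderiv ℝ f) x := h1.differentiableAt (by norm_num)
  have h2 := ((ContinuousLinearMap.apply ℝ ℝ e).differentiableAt).comp x hd
  simpa [Function.comp_def] using h2

lemma dir2nonneg {N : ℕ} {w : (Fin N → ℝ) → ℝ} {U : Set (Fin N → ℝ)}
    (hU : IsOpen U) {x : Fin N → ℝ} (hx : x ∈ U)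
    (hw : ContDiffOn ℝ 2 w U) (hmin : IsLocalMin w x) (e : Fin N → ℝ) :
    0 ≤ ∑ j, ∑ k, e j * e k * pd2 N w j k x := by
  classical
  set γ : ℝ → (Fin N → ℝ) := fun t => x + t • e with hγdef
  have hγ0 : γ 0 = x := by simp [hγdef]
  have hγd : ∀ t : ℝ, HasDerivAt γ e t := by
    intro t
    simpa [hγdef] using ((hasDerivAt_id t).smul_const e).const_add x
  have hγc : Continuous γ := by
    apply continuous_const.add
    exact (continuous_id.smul continuous_const)
  have hcd : ContDiffAt ℝ 2 w x := hw.contDiffAt (hU.mem_nhds hx)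
  have hUev : ∀ᶠ t in 𝓝 (0:ℝ), γ t ∈ U :=
    hγc.continuousAt.eventually_mem (hU.mem_nhds (by rw [hγ0]; exact hx))
  have hdiff : ∀ᶠ t in 𝓝 (0:ℝ), DifferentiableAt ℝ w (γ t) :=
    hUev.mono (fun t ht =>
      (hw.differentiableOn (by norm_num)).differentiableAt (hU.mem_nhds ht))
  have hd : ∀ᶠ t in 𝓝 (0:ℝ), HasDerivAt (fun t => w (γ t)) (fderiv ℝ w (γ t) e) t :=
    hdiff.mono (fun t ht => ht.hasFDerivAt.comp_hasDerivAt t (hγd t))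
  set c : ℝ := fderiv ℝ (fun y => fderiv ℝ w y e) x e with hcdef
  have hF : DifferentiableAt ℝ (fun y => fderiv ℝ w y e) x := diff_fderiv_apply hcd e
  have hd2 : HasDerivAt (fun t => fderiv ℝ w (γ t) e) c 0 := by
    have hF' : HasFDerivAt (fun y => fderiv ℝ w y e)
        (fderiv ℝ (fun y => fderiv ℝ w y e) x) (γ 0) := by
      rw [hγ0]; exact hF.hasFDerivAt
    exact hF'.comp_hasDerivAt 0 (hγd 0)
  have hmin' : IsLocalMin (fun t => w (γ t)) 0 := by
    have : IsLocalMin w (γ 0) := by rw [hγ0]; exact hmin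
    exact this.comp_continuous hγc.continuousAt
  have key : 0 ≤ c := secondDerivTest hd hd2 hmin'
  -- now compute c
  have heq : (fun y => fderiv ℝ w y e) =ᶠ[𝓝 x]
      (fun y => ∑ k, e k * pd1 N w k y) := by
    filter_upwards with y
    exact clm_apply_eq_sum (fderiv ℝ w y) e
  have hc1 : c = fderiv ℝ (fun y => ∑ k, e k * pd1 N w k y) x e := by
    rw [hcdef, Filter.EventuallyEq.fderiv_eq heq.symm]
  have hdiffk : ∀ k : Fin N, DifferentiableAt ℝ (fun z => pd1 N w k z) x :=
    fun k => diff_pd1 hcd k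
  have hc2 : fderiv ℝ (fun y => ∑ k, e k * pd1 N w k y) x =
      ∑ k, e k • fderiv ℝ (fun z => pd1 N w k z) x := by
    rw [fderiv_fun_sum (fun k _ => ((hdiffk k).const_mul (e k)))]
    congr 1
    funext k
    exact fderiv_const_mul (hdiffk k) (e k)
  have hc3 : c = ∑ k, e k * (∑ j, e j * pd2 N w j k x) := by
    rw [hc1, hc2]
    rw [ContinuousLinearMap.sum_apply]
    congr 1
    funext k
    rw [ContinuousLinearMap.smul_apply, smul_eq_mul]
    congr 1
    exact clm_apply_eq_sum (fderiv ℝ (fun z => pd1 N w k z) x) e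
  rw [hc3] at key
  calc (0:ℝ) ≤ ∑ k, e k * (∑ j, e j * pd2 N w j k x) := key
    _ = ∑ j, ∑ k, e j * e k * pd2 N w j k x := by
        rw [Finset.sum_comm]
        congr 1; funext k
        rw [Finset.mul_sum]
        congr 1; funext j
        ring


lemma psd_of_ell {N : ℕ} (b : Fin N → Fin N → ℝ) (hsym : ∀ j k, b j k = b k j)
    (δ : ℝ) (hδ : 0 < δ)
    (hell : ∀ σ : Fin N → ℝ, δ * ∑ j, σ j ^ 2 ≤ ∑ j, ∑ k, b j k * (σ j * σ k)) :
    (Matrix.of b).PosSemidef := by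
  rw [Matrix.posSemidef_iff_dotProduct_mulVec]
  constructor
  · ext j k
    simp [Matrix.conjTranspose_apply, hsym j k]
  · intro x
    have h := hell x
    have h0 : (0:ℝ) ≤ δ * ∑ j, x j ^ 2 := by positivity
    have h2 : (0:ℝ) ≤ ∑ j, ∑ k, b j k * (x j * x k) := le_trans h0 h
    have : dotProduct (star x) ((Matrix.of b).mulVec x) = ∑ j, ∑ k, b j k * (x j * x k) := by
      simp [dotProduct, Matrix.mulVec, Finset.mul_sum]
      congr 1; funext j; congr 1; funext k; ring
    rw [this]
    exact h2

lemma trace_psd_nonneg {N : ℕ} (aM : Matrix (Fin N) (Fin N) ℝ) (hPSD : aM.PosSemidef)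
    (H : Fin N → Fin N → ℝ)
    (hH : ∀ e : Fin N → ℝ, 0 ≤ ∑ j, ∑ k, e j * e k * H j k) :
    0 ≤ ∑ j, ∑ k, aM j k * H j k := by
  classical
  obtain ⟨m', v, hv⟩ := Matrix.posSemidef_iff_eq_sum_vecMulVec.mp hPSD
  set s : Fin N → Fin m' → ℝ := fun j l => v l j with hsdef
  have ha : ∀ j k, aM j k = ∑ l, s j l * s k l := by
    intro j k
    simp [hv, Matrix.sum_apply, vecMulVec_apply, hsdef]
  have key : ∑ j, ∑ k, aM j k * H j k = ∑ l, ∑ j, ∑ k, s j l * s k l * H j k := by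
    have h1 : ∑ j, ∑ k, aM j k * H j k = ∑ j, ∑ k, ∑ l, s j l * s k l * H j k := by
      congr 1; funext j; congr 1; funext k
      rw [ha j k, Finset.sum_mul]
    rw [h1]
    have h2 : ∀ j : Fin N, ∑ k, ∑ l, s j l * s k l * H j k
        = ∑ l, ∑ k, s j l * s k l * H j k := fun j => Finset.sum_comm
    simp_rw [h2]
    exact Finset.sum_comm
  rw [key]
  apply Finset.sum_nonneg
  intro l _
  exact hH (fun j => s j l)




section quad
variable {N : ℕ}

noncomputable abbrev prj (l : Fin N) : ((Fin N → ℝ) →L[ℝ] ℝ) :=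
  ContinuousLinearMap.proj l

lemma contdiff_quad (η c₁ c₂ : ℝ) (n' : Fin N) :
    ContDiff ℝ 2 (fun z : Fin N → ℝ =>
      η * (∑ l, z l * z l) + c₁ * z n' + c₂ * (z n' * z n')) := by
  have hl : ∀ l : Fin N, ContDiff ℝ 2 (fun z : Fin N → ℝ => z l) :=
    fun l => (prj l).contDiff
  have hs : ContDiff ℝ 2 (fun z : Fin N → ℝ => ∑ l, z l * z l) :=
    ContDiff.sum (fun l _ => (hl l).mul (hl l))
  exact ((contDiff_const.mul hs).add (contDiff_const.mul (hl n'))).add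
    (contDiff_const.mul ((hl n').mul (hl n')))

lemma hasfderiv_quad (η c₁ c₂ : ℝ) (n' : Fin N) (z : Fin N → ℝ) :
    HasFDerivAt (fun z : Fin N → ℝ =>
        η * (∑ l, z l * z l) + c₁ * z n' + c₂ * (z n' * z n'))
      (η • (∑ l, ((z l) • prj l + (z l) • prj l)) + c₁ • prj n'
        + c₂ • ((z n') • prj n' + (z n') • prj n')) z := by
  have h1 : HasFDerivAt (fun z : Fin N → ℝ => ∑ l, z l * z l)
      (∑ l, ((z l) • prj l + (z l) • prj l)) z :=
    HasFDerivAt.fun_sum (fun l _ => ((prj l).hasFDerivAt.mul (prj l).hasFDerivAt))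
  have h2 := (h1.const_mul η).add ((prj n').hasFDerivAt.const_mul c₁)
  have hm : HasFDerivAt (fun z : Fin N → ℝ => z n' * z n')
      ((z n') • prj n' + (z n') • prj n') z :=
    (prj n').hasFDerivAt.mul (prj n').hasFDerivAt
  exact h2.add (hm.const_mul c₂)

lemma pd1_quad (η c₁ c₂ : ℝ) (n' k : Fin N) (z : Fin N → ℝ) :
    pd1 N (fun z : Fin N → ℝ =>
        η * (∑ l, z l * z l) + c₁ * z n' + c₂ * (z n' * z n')) k z
      = 2 * η * z k + c₁ * (Pi.single k (1:ℝ) : Fin N → ℝ) n'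
        + 2 * c₂ * z n' * (Pi.single k (1:ℝ) : Fin N → ℝ) n' := by
  unfold pd1
  rw [(hasfderiv_quad η c₁ c₂ n' z).fderiv]
  simp [ContinuousLinearMap.sum_apply, Pi.single_apply, Finset.mul_sum,
    Finset.sum_ite_eq']
  have h : ∀ x : Fin N, η * ((if x = k then z x else 0) + if x = k then z x else 0)
      = (if x = k then 2*η*z x else 0) := fun x => by split_ifs <;> ring
  simp_rw [h, Finset.sum_ite_eq']
  simp
  split_ifs <;> ring

lemma pd1_aff (A B C : ℝ) (k0 n0 : Fin N) (j : Fin N) (x : Fin N → ℝ) :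
    pd1 N (fun z => A * z k0 + B * z n0 + C) j x
      = A * (Pi.single j (1:ℝ) : Fin N → ℝ) k0
        + B * (Pi.single j (1:ℝ) : Fin N → ℝ) n0 := by
  unfold pd1
  have h : HasFDerivAt (fun z : Fin N → ℝ => A * z k0 + B * z n0 + C)
      (A • prj k0 + B • prj n0) x :=
    (((prj k0).hasFDerivAt.const_mul A).add
      ((prj n0).hasFDerivAt.const_mul B)).add_const C
  rw [h.fderiv]
  simp

lemma pd2_quad (η c₁ c₂ : ℝ) (n' j k : Fin N) (x : Fin N → ℝ) :
    pd2 N (fun z : Fin N → ℝ =>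
        η * (∑ l, z l * z l) + c₁ * z n' + c₂ * (z n' * z n')) j k x
      = 2 * η * (Pi.single j (1:ℝ) : Fin N → ℝ) k
        + 2 * c₂ * ((Pi.single k (1:ℝ) : Fin N → ℝ) n')
          * ((Pi.single j (1:ℝ) : Fin N → ℝ) n') := by
  unfold pd2
  have hfun : (fun z => pd1 N (fun z : Fin N → ℝ =>
        η * (∑ l, z l * z l) + c₁ * z n' + c₂ * (z n' * z n')) k z)
      = (fun z : Fin N → ℝ => (2*η) * z k
          + (2*c₂*((Pi.single k (1:ℝ) : Fin N → ℝ) n')) * z n'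
          + c₁*((Pi.single k (1:ℝ) : Fin N → ℝ) n')) := by
    funext z
    rw [pd1_quad]
    ring
  rw [hfun, pd1_aff]

lemma pd1_sub_const {f : (Fin N → ℝ) → ℝ} (c : ℝ) (k : Fin N) (z : Fin N → ℝ) :
    pd1 N (fun y => f y - c) k z = pd1 N f k z := by
  unfold pd1
  rw [fderiv_sub_const]

lemma pd2_sub_const {f : (Fin N → ℝ) → ℝ} (c : ℝ) (j k : Fin N) (x : Fin N → ℝ) :
    pd2 N (fun y => f y - c) j k x = pd2 N f j k x := by
  unfold pd2
  have : (fun z => pd1 N (fun y => f y - c) k z) = (fun z => pd1 N f k z) := by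
    funext z; exact pd1_sub_const c k z
  exact congrFun (congrFun (congrArg (pd1 N) this) j) x




lemma pd2_add {N : ℕ} {U : Set (Fin N → ℝ)} (hU : IsOpen U) {x : Fin N → ℝ}
    (hx : x ∈ U) {f g : (Fin N → ℝ) → ℝ}
    (hf : ContDiffOn ℝ 2 f U) (hg : ContDiff ℝ 2 g) (j k : Fin N) :
    pd2 N (fun z => f z + g z) j k x = pd2 N f j k x + pd2 N g j k x := by
  have hfd : ∀ z ∈ U, DifferentiableAt ℝ f z := fun z hz =>
    (hf.differentiableOn (by norm_num)).differentiableAt (hU.mem_nhds hz)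
  have hgd : ∀ z, DifferentiableAt ℝ g z := fun z =>
    (hg.differentiable (by norm_num)).differentiableAt
  have hstep : ∀ z ∈ U,
      pd1 N (fun z => f z + g z) k z = pd1 N f k z + pd1 N g k z := by
    intro z hz
    unfold pd1
    rw [fderiv_fun_add (hfd z hz) (hgd z)]
    simp
  have hev : (fun z => pd1 N (fun z => f z + g z) k z) =ᶠ[𝓝 x]
      (fun z => pd1 N f k z + pd1 N g k z) := by
    filter_upwards [hU.mem_nhds hx] with z hz using hstep z hz
  have h2 : pd2 N (fun z => f z + g z) j k x
      = fderiv ℝ (fun z => pd1 N f k z + pd1 N g k z) x (Pi.single j 1) := by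
    show fderiv ℝ (fun z => pd1 N (fun z => f z + g z) k z) x (Pi.single j 1) = _
    rw [Filter.EventuallyEq.fderiv_eq hev]
  rw [h2, fderiv_fun_add (diff_pd1 (hf.contDiffAt (hU.mem_nhds hx)) k)
    (diff_pd1 hg.contDiffAt k)]
  simp [pd2, pd1]

end quad


set_option maxHeartbeats 2000000 in
/-- sufficiency in Theorem 3: if A is an invertible m×m matrix,
L_1,...,L_m are scalar constant-coefficient elliptic operators, and the operator
𝔄₀(D) = A·diag(L_1,...,L_m) (with matrix coefficients 𝔄_{jk} = A·diag(a⁽ⁱ⁾_{jk}))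
is strongly elliptic, then the orthant {u : u_i ≥ α_i ∀i} is invariant for the
system 𝔄₀(D)u = 0 in the half-space ℝⁿ₊ = {x : x_n > 0}: every bounded solution
u ∈ C_b(cl ℝⁿ₊)ᵐ ∩ C²(ℝⁿ₊)ᵐ with boundary values in the orthant takes all its
values in the orthant. (Dimension is n+1, with last coordinate normal to the
boundary.) -/
theorem stmt_17 (n m : ℕ)
    (A : Matrix (Fin m) (Fin m) ℝ) (hA : IsUnit A)
    (a : Fin m → Fin (n + 1) → Fin (n + 1) → ℝ)
    (hsym : ∀ i j k, a i j k = a i k j)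
    (δ : ℝ) (hδ : 0 < δ)
    (hellL : ∀ i, ∀ σ : Fin (n + 1) → ℝ,
      δ * ∑ j, σ j ^ 2 ≤ ∑ j, ∑ k, a i j k * (σ j * σ k))
    (δ' : ℝ) (hδ' : 0 < δ')
    (hSE : ∀ (σ : Fin (n + 1) → ℝ) (ζ : Fin m → ℝ),
      δ' * ((∑ j, σ j ^ 2) * (∑ i, ζ i ^ 2)) ≤
        ∑ j, ∑ k, σ j * σ k *
          ((A * Matrix.diagonal fun i => a i j k).mulVec ζ ⬝ᵥ ζ))
    (α : Fin m → ℝ)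
    (u : (Fin (n + 1) → ℝ) → (Fin m → ℝ))
    (hu1 : ContinuousOn u {x | 0 ≤ x (Fin.last n)})
    (hu2 : ContDiffOn ℝ 2 u {x | 0 < x (Fin.last n)})
    (hub : ∃ C : ℝ, ∀ x, 0 ≤ x (Fin.last n) → ‖u x‖ ≤ C)
    (hsol : ∀ x, 0 < x (Fin.last n) →
      A.mulVec (fun i => ∑ j, ∑ k, a i j k * pd2 (n + 1) (fun z => u z i) j k x)
        = 0)
    (hbc : ∀ x, x (Fin.last n) = 0 → ∀ i, α i ≤ u x i) :
    ∀ x, 0 ≤ x (Fin.last n) → ∀ i, α i ≤ u x i := by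
  classical
  intro x₀ hx₀ i
  obtain ⟨C, hC⟩ := hub
  have hdet : IsUnit A.det := (Matrix.isUnit_iff_isUnit_det A).mp hA
  set n' : Fin (n+1) := Fin.last n with hn'
  have hdec : ∀ x : Fin (n+1) → ℝ, 0 < x n' →
      ∑ j, ∑ k, a i j k * pd2 (n+1) (fun z => u z i) j k x = 0 := by
    intro x hx
    have h0 := hsol x hx
    have h2 := congrArg (A⁻¹.mulVec) h0
    rw [Matrix.mulVec_mulVec, Matrix.nonsing_inv_mul A hdet, Matrix.one_mulVec,
      Matrix.mulVec_zero] at h2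
    exact congrFun h2 i
  have hdiag : ∀ j0 : Fin (n+1), δ ≤ a i j0 j0 := by
    intro j0
    have h := hellL i (Pi.single j0 1)
    have hL : δ * ∑ j, (Pi.single j0 (1:ℝ) : Fin (n+1) → ℝ) j ^ 2 = δ := by
      simp [Pi.single_apply, Finset.sum_ite_eq']
    have hR : ∑ j, ∑ k, a i j k * ((Pi.single j0 (1:ℝ) : Fin (n+1) → ℝ) j
        * (Pi.single j0 (1:ℝ) : Fin (n+1) → ℝ) k) = a i j0 j0 := by
      simp [Pi.single_apply, mul_ite, ite_mul, Finset.sum_ite_eq']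
    rw [hL, hR] at h
    exact h
  have hann : 0 < a i n' n' := lt_of_lt_of_le hδ (hdiag n')
  set ann : ℝ := a i n' n' with hanndef
  set tr : ℝ := ∑ j, a i j j with htrdef
  have htrpos : 0 < tr :=
    Finset.sum_pos (fun j _ => lt_of_lt_of_le hδ (hdiag j)) Finset.univ_nonempty
  set K : ℝ := tr / ann with hKdef
  have hKnn : 0 ≤ K := le_of_lt (div_pos htrpos hann)
  have hPSD : (Matrix.of (a i)).PosSemidef := psd_of_ell (a i) (hsym i) δ hδ (hellL i)
  set U : Set (Fin (n+1) → ℝ) := {x | 0 < x n'} with hUdef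
  have hUopen : IsOpen U := isOpen_lt continuous_const (continuous_apply n')
  set v : (Fin (n+1) → ℝ) → ℝ := fun z => u z i - α i with hvdef
  have hvC2 : ContDiffOn ℝ 2 v U := by
    have h1 : ContDiffOn ℝ 2 (fun z => u z i) U :=
      (ContinuousLinearMap.proj (R := ℝ) (φ := fun _ : Fin m => ℝ)
        i).contDiff.comp_contDiffOn hu2
    exact h1.sub contDiffOn_const
  have hvcont : ContinuousOn v {x | 0 ≤ x n'} := by
    have h1 : ContinuousOn (fun z => u z i) {x | 0 ≤ x n'} :=
      (continuous_apply i).comp_continuousOn hu1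
    exact h1.sub continuousOn_const
  set M : ℝ := |C| + |α i| + 1 with hMdef
  have hMpos : 0 < M := by positivity
  have hvM : ∀ z, 0 ≤ z n' → -M ≤ v z := by
    intro z hz
    have h1 : |u z i| ≤ C := by
      have h2 := norm_le_pi_norm (u z) i
      have h3 := hC z hz
      rw [Real.norm_eq_abs] at h2
      linarith
    have h4 : -C ≤ u z i := neg_le_of_abs_le h1
    have h5 : α i ≤ |α i| := le_abs_self _
    have h6 : C ≤ |C| := le_abs_self _
    simp only [hvdef, hMdef]
    linarith
  have hv0 : ∀ z : Fin (n+1) → ℝ, z n' = 0 → 0 ≤ v z :=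
    fun z hz => sub_nonneg.mpr (hbc z hz i)
  set Qf : (Fin (n+1) → ℝ) → ℝ := fun z => (∑ l, z l * z l) - z n' * z n' with hQfdef
  have hQferase : ∀ z, Qf z = ∑ l ∈ Finset.univ.erase n', z l * z l := by
    intro z
    have h : (∑ l ∈ Finset.univ.erase n', z l * z l) + z n' * z n' = ∑ l, z l * z l :=
      Finset.sum_erase_add Finset.univ _ (Finset.mem_univ n')
    show (∑ l, z l * z l) - z n' * z n' = _
    linarith
  have hQfnn : ∀ z, 0 ≤ Qf z := by
    intro z
    rw [hQferase]
    exact Finset.sum_nonneg (fun l _ => mul_self_nonneg _)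
  have hQfcont : Continuous Qf := by
    apply Continuous.sub
    · exact continuous_finset_sum _ (fun l _ => (continuous_apply l).mul (continuous_apply l))
    · exact (continuous_apply n').mul (continuous_apply n')
  have main : ∀ ε : ℝ, 0 < ε → ∀ η : ℝ, 0 < η →
      0 ≤ v x₀ + (η * Qf x₀ + ε * x₀ n'
        + η * K * (x₀ n' * (2 * max (M/ε) (x₀ n') - x₀ n'))) := by
    intro ε hε η hη
    set R : ℝ := max (M/ε) (x₀ n') with hRdef
    have hR0 : 0 ≤ R := le_trans hx₀ (le_max_right _ _)
    have hRM : M / ε ≤ R := le_max_left _ _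
    have hεR : M ≤ ε * R := by
      have h := (div_le_iff₀ hε).mp hRM
      nlinarith
    set ρsq : ℝ := max (M/η) (Qf x₀) with hρdef
    have hρM : M / η ≤ ρsq := le_max_left _ _
    have hηρ : M ≤ η * ρsq := by
      have h := (div_le_iff₀ hη).mp hρM
      nlinarith
    have hρ0 : 0 ≤ ρsq := le_trans (hQfnn x₀) (le_max_right _ _)
    set c₁ : ℝ := ε + 2*η*K*R with hc₁def
    set c₂ : ℝ := -(η*(1+K)) with hc₂def
    set P : (Fin (n+1) → ℝ) → ℝ :=
      fun z => η * (∑ l, z l * z l) + c₁ * z n' + c₂ * (z n' * z n') with hPdef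
    set w : (Fin (n+1) → ℝ) → ℝ := fun z => v z + P z with hwdef
    have hPform : ∀ z, w z = v z + (η * Qf z + ε * z n'
        + η * K * (z n' * (2*R - z n'))) := by
      intro z
      simp only [hwdef, hPdef, hQfdef, hc₁def, hc₂def]
      ring
    set Kset : Set (Fin (n+1) → ℝ) := {z | 0 ≤ z n' ∧ z n' ≤ R ∧ Qf z ≤ ρsq} with hKsetdef
    have hKclosed : IsClosed Kset := by
      have h1 : IsClosed {z : Fin (n+1) → ℝ | 0 ≤ z n'} :=
        isClosed_le continuous_const (continuous_apply n')
      have h2 : IsClosed {z : Fin (n+1) → ℝ | z n' ≤ R} :=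
        isClosed_le (continuous_apply n') continuous_const
      have h3 : IsClosed {z : Fin (n+1) → ℝ | Qf z ≤ ρsq} :=
        isClosed_le hQfcont continuous_const
      have he : Kset = ({z : Fin (n+1) → ℝ | 0 ≤ z n'} ∩ {z | z n' ≤ R}) ∩ {z | Qf z ≤ ρsq} := by
        ext z; simp [hKsetdef, Set.mem_inter_iff, and_assoc]
      rw [he]
      exact (h1.inter h2).inter h3
    have hKbdd : Bornology.IsBounded Kset := by
      apply (Metric.isBounded_closedBall (x := (0 : Fin (n+1) → ℝ)) (r := R + ρsq + 1)).subset
      intro z hz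
      rw [Metric.mem_closedBall, dist_zero_right]
      rw [pi_norm_le_iff_of_nonneg (by positivity)]
      intro l
      rw [Real.norm_eq_abs]
      by_cases hl : l = n'
      · subst hl
        rw [abs_of_nonneg hz.1]
        have := hz.2.1
        linarith
      · have hle : z l * z l ≤ Qf z := by
          rw [hQferase]
          exact Finset.single_le_sum (fun l' _ => mul_self_nonneg (z l'))
            (Finset.mem_erase.mpr ⟨hl, Finset.mem_univ l⟩)
        have h2 : z l * z l ≤ ρsq := le_trans hle hz.2.2
        nlinarith [abs_nonneg (z l), abs_mul_abs_self (z l), hR0, hρ0]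
    have hKcomp : IsCompact Kset := Metric.isCompact_of_isClosed_isBounded hKclosed hKbdd
    have hx₀K : x₀ ∈ Kset := ⟨hx₀, le_max_right _ _, le_max_right _ _⟩
    have hPcont : Continuous P := (contdiff_quad η c₁ c₂ n').continuous
    have hwcont : ContinuousOn w Kset := by
      apply ContinuousOn.add
      · exact hvcont.mono (fun z hz => hz.1)
      · exact hPcont.continuousOn
    obtain ⟨xs, hxsK, hxsmin⟩ := hKcomp.exists_isMinOn ⟨x₀, hx₀K⟩ hwcont
    have hminle := isMinOn_iff.mp hxsmin
    have hw0 : 0 ≤ w xs := by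
      by_cases hS : 0 < xs n' ∧ xs n' < R ∧ Qf xs < ρsq
      · exfalso
        have hSopen : IsOpen {z : Fin (n+1) → ℝ | 0 < z n' ∧ z n' < R ∧ Qf z < ρsq} := by
          have h1 : IsOpen {z : Fin (n+1) → ℝ | 0 < z n'} :=
            isOpen_lt continuous_const (continuous_apply n')
          have h2 : IsOpen {z : Fin (n+1) → ℝ | z n' < R} :=
            isOpen_lt (continuous_apply n') continuous_const
          have h3 : IsOpen {z : Fin (n+1) → ℝ | Qf z < ρsq} :=
            isOpen_lt hQfcont continuous_const
          have he : {z : Fin (n+1) → ℝ | 0 < z n' ∧ z n' < R ∧ Qf z < ρsq}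
              = ({z : Fin (n+1) → ℝ | 0 < z n'} ∩ {z | z n' < R}) ∩ {z | Qf z < ρsq} := by
            ext z; simp [Set.mem_inter_iff, and_assoc]
          rw [he]
          exact (h1.inter h2).inter h3
        have hSsub : {z : Fin (n+1) → ℝ | 0 < z n' ∧ z n' < R ∧ Qf z < ρsq} ⊆ Kset :=
          fun z hz => ⟨le_of_lt hz.1, le_of_lt hz.2.1, le_of_lt hz.2.2⟩
        have hlocmin : IsLocalMin w xs := by
          filter_upwards [hSopen.mem_nhds hS] with z hz using hminle z (hSsub hz)
        have hxsU : xs ∈ U := hS.1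
        have hwC2 : ContDiffOn ℝ 2 w U :=
          hvC2.add (contdiff_quad η c₁ c₂ n').contDiffOn
        have hkey : 0 ≤ ∑ j, ∑ k, a i j k * pd2 (n+1) w j k xs := by
          have h := trace_psd_nonneg (Matrix.of (a i)) hPSD
            (fun j k => pd2 (n+1) w j k xs)
            (fun e => dir2nonneg hUopen hxsU hwC2 hlocmin e)
          simpa [Matrix.of_apply] using h
        have hsplit : ∀ j k : Fin (n+1),
            pd2 (n+1) w j k xs = pd2 (n+1) v j k xs + pd2 (n+1) P j k xs :=
          fun j k => pd2_add hUopen hxsU hvC2 (contdiff_quad η c₁ c₂ n') j k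
        have hveq : ∀ j k : Fin (n+1),
            pd2 (n+1) v j k xs = pd2 (n+1) (fun z => u z i) j k xs :=
          fun j k => pd2_sub_const (α i) j k xs
        have hsum1 : ∑ j, ∑ k, a i j k * pd2 (n+1) v j k xs = 0 := by
          simp_rw [hveq]
          exact hdec xs hS.1
        have hPval : ∀ j k : Fin (n+1), pd2 (n+1) P j k xs
            = 2*η*((Pi.single j (1:ℝ) : Fin (n+1) → ℝ) k)
              + 2*c₂*((Pi.single k (1:ℝ) : Fin (n+1) → ℝ) n')
                * ((Pi.single j (1:ℝ) : Fin (n+1) → ℝ) n') :=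
          fun j k => pd2_quad η c₁ c₂ n' j k xs
        have hterm : ∀ j k : Fin (n+1), a i j k * pd2 (n+1) P j k xs
            = (if k = j then 2*η*a i j k else 0)
              + (if n' = k then (if n' = j then 2*c₂*a i j k else 0) else 0) := by
          intro j k
          rw [hPval j k]
          simp only [Pi.single_apply]
          split_ifs <;> ring
        have hsum2 : ∑ j, ∑ k, a i j k * pd2 (n+1) P j k xs = 2*η*tr + 2*c₂*ann := by
          calc ∑ j, ∑ k, a i j k * pd2 (n+1) P j k xs
              = ∑ j : Fin (n+1), ∑ k : Fin (n+1), ((if k = j then 2*η*a i j k else 0)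
                + (if n' = k then (if n' = j then 2*c₂*a i j k else 0) else 0)) :=
                Finset.sum_congr rfl (fun j _ => Finset.sum_congr rfl (fun k _ => hterm j k))
            _ = (∑ j : Fin (n+1), ∑ k : Fin (n+1), (if k = j then 2*η*a i j k else 0))
                + ∑ j : Fin (n+1), ∑ k : Fin (n+1),
                  (if n' = k then (if n' = j then 2*c₂*a i j k else 0) else 0) := by
                simp [Finset.sum_add_distrib]
            _ = 2*η*tr + 2*c₂*ann := by
                simp only [Finset.sum_ite_eq', Finset.sum_ite_eq, Finset.mem_univ, if_true]
                rw [htrdef, hanndef, Finset.mul_sum]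
        have hcombine : (∑ j, ∑ k, a i j k * pd2 (n+1) w j k xs) = 2*η*tr + 2*c₂*ann := by
          calc ∑ j, ∑ k, a i j k * pd2 (n+1) w j k xs
              = ∑ j : Fin (n+1), ∑ k : Fin (n+1), (a i j k * pd2 (n+1) v j k xs
                  + a i j k * pd2 (n+1) P j k xs) :=
                Finset.sum_congr rfl (fun j _ => Finset.sum_congr rfl
                  (fun k _ => by rw [hsplit j k]; ring))
            _ = (∑ j, ∑ k, a i j k * pd2 (n+1) v j k xs)
                + ∑ j, ∑ k, a i j k * pd2 (n+1) P j k xs := by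
                simp [Finset.sum_add_distrib]
            _ = 2*η*tr + 2*c₂*ann := by rw [hsum1, hsum2]; ring
        rw [hcombine] at hkey
        have hid : 2*η*tr + 2*c₂*ann = -(2*η*ann) := by
          rw [hc₂def, hKdef]
          field_simp
          ring
        rw [hid] at hkey
        have hpos : 0 < 2*η*ann := by positivity
        linarith
      · rw [hPform xs]
        have h1 := hxsK.1
        have h2 := hxsK.2.1
        have h3 := hxsK.2.2
        by_cases hb1 : xs n' ≤ 0
        · have hz0 : xs n' = 0 := le_antisymm hb1 h1
          have hvz := hv0 xs hz0
          have hq := hQfnn xs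
          rw [hz0]
          nlinarith [mul_nonneg hη.le hq]
        · push_neg at hb1
          by_cases hb2 : R ≤ xs n'
          · have hzR : xs n' = R := le_antisymm h2 hb2
            have hvz := hvM xs h1
            rw [hzR]
            have hq : 0 ≤ η * Qf xs := mul_nonneg hη.le (hQfnn xs)
            have hkr : 0 ≤ η * K * (R * (2*R - R)) := by
              apply mul_nonneg (mul_nonneg hη.le hKnn)
              apply mul_nonneg hR0
              linarith
            nlinarith [hεR]
          · push_neg at hb2
            have hb3 : ρsq ≤ Qf xs := by
              by_contra hc4
              push_neg at hc4
              exact hS ⟨hb1, hb2, hc4⟩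
            have hQeq : Qf xs = ρsq := le_antisymm h3 hb3
            have hvz := hvM xs h1
            have hMle : M ≤ η * Qf xs := by rw [hQeq]; exact hηρ
            have hkr : 0 ≤ η * K * (xs n' * (2*R - xs n')) := by
              apply mul_nonneg (mul_nonneg hη.le hKnn)
              apply mul_nonneg (le_of_lt hb1)
              linarith
            have hε1 : 0 ≤ ε * xs n' := mul_nonneg hε.le (le_of_lt hb1)
            linarith
    have hfin := hminle x₀ hx₀K
    have hw00 := le_trans hw0 hfin
    rw [hPform x₀] at hw00
    exact hw00
  have step1 : ∀ ε : ℝ, 0 < ε → 0 ≤ v x₀ + ε * x₀ n' := by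
    intro ε hε
    have h := aux_lim (c := -(v x₀ + ε * x₀ n'))
      (B := Qf x₀ + K * (x₀ n' * (2 * max (M/ε) (x₀ n') - x₀ n')))
      (fun η hη => by nlinarith [main ε hε η hη])
    linarith
  have step2 : 0 ≤ v x₀ := by
    have h := aux_lim (c := -(v x₀)) (B := x₀ n')
      (fun ε hε => by have := step1 ε hε; linarith)
    linarith
  have : 0 ≤ u x₀ i - α i := step2
  linarith
end
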